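/- Consider the immersion x(u,v) = e^{ku}(cosh u cos v, sinh u cos v, cosh u sin v, sinh u sin v) in ℝ⁴ with J(x₁,x₂,x₃,x₄) = (x₂,x₁,x₄,x₃) and g = diag(1,-1,1,-1). At every point, the tangential part P of J on the tangent plane W = span(∂x/∂u, ∂x/∂v) is zero, i.e. J maps W into W⊥ (the surface is totally real). -/
import Mathlib


def J4 (v : Fin 4 → ℝ) : Fin 4 → ℝ := ![v 1, v 0, v 3, v 2]

def g4 (v w : Fin 4 → ℝ) : ℝ := v 0 * w 0 - v 1 * w 1 + v 2 * w 2 - v 3 * w 3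

theorem stmt_15 (k u v : ℝ) (W : Submodule ℝ (Fin 4 → ℝ))
    (hW : W = Submodule.span ℝ
      {![Real.exp (k * u) * (k * Real.cosh u + Real.sinh u) * Real.cos v,
         Real.exp (k * u) * (k * Real.sinh u + Real.cosh u) * Real.cos v,
         Real.exp (k * u) * (k * Real.cosh u + Real.sinh u) * Real.sin v,
         Real.exp (k * u) * (k * Real.sinh u + Real.cosh u) * Real.sin v],
       ![-(Real.exp (k * u) * Real.cosh u * Real.sin v),
         -(Real.exp (k * u) * Real.sinh u * Real.sin v),
         Real.exp (k * u) * Real.cosh u * Real.cos v,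
         Real.exp (k * u) * Real.sinh u * Real.cos v]}) :
    ∀ w ∈ W, ∀ w' ∈ W, g4 (J4 w) w' = 0 := by
  subst hW
  intro w hw w' hw'
  obtain ⟨a, b, rfl⟩ := Submodule.mem_span_pair.mp hw
  obtain ⟨c, d, rfl⟩ := Submodule.mem_span_pair.mp hw'
  simp only [g4, J4, Pi.add_apply, Pi.smul_apply, smul_eq_mul,
    Matrix.cons_val_zero, Matrix.cons_val_one, Matrix.head_cons,
    Matrix.cons_val_two, Matrix.tail_cons, Matrix.cons_val_three]
  ring
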